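/- arXiv:2205.11884 — 11 statements merged into one kernel-verified Lean document; each statement's English description precedes it below -/
import Mathlib

section
/- Let k be an odd positive integer, let x_i, y_i, z_i ∈ {0,1} for 0 ≤ i ≤ n, and define S_t = Σ_{i=n-t}^n (x_i + z_i - k y_i) 2^i. Suppose x_i XOR y_i XOR z_i = 0 for all i with n-t ≤ i ≤ n and S_t < 0. Then for every natural number j with t < j ≤ n, S_j < 0. -/
/-- `S_t = Σ_{i=n-t}^n (x_i + z_i - k y_i) 2^i` as an integer. -/
def Spoly (k n : ℕ) (x y z : ℕ → ℕ) (t : ℕ) : ℤ :=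
  ∑ i ∈ Finset.Icc (n - t) n, ((x i : ℤ) + (z i : ℤ) - (k : ℤ) * (y i : ℤ)) * 2 ^ i

theorem stmt_4 (k n t : ℕ) (hk : Odd k) (hk0 : 0 < k) (ht : t ≤ n)
    (x y z : ℕ → ℕ)
    (hx : ∀ i ≤ n, x i ≤ 1) (hy : ∀ i ≤ n, y i ≤ 1) (hz : ∀ i ≤ n, z i ≤ 1)
    (hxor : ∀ i, n - t ≤ i → i ≤ n → (x i + y i + z i) % 2 = 0)
    (hS : Spoly k n x y z t < 0) :
    ∀ j, t < j → j ≤ n → Spoly k n x y z j < 0 := by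
  intro j htj hjn
  -- Step 1: divisibility of Spoly t by 2^(n-t+1)
  have hdvd : (2:ℤ)^(n - t + 1) ∣ Spoly k n x y z t := by
    apply Finset.dvd_sum
    intro i hi
    simp only [Finset.mem_Icc] at hi
    have h2 : (2:ℤ) ∣ ((x i : ℤ) + z i - k * y i) := by
      obtain ⟨m, hm⟩ := hk
      have h1 := hxor i hi.1 hi.2
      have hxi := hx i hi.2
      have hyi := hy i hi.2
      have hzi := hz i hi.2
      have hy01 : y i = 0 ∨ y i = 1 := by omega
      rcases hy01 with h | h <;> rw [h] at h1 ⊢ <;> push_cast <;> omega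
    have h3 : (2:ℤ)^(n-t) ∣ 2^i := pow_dvd_pow 2 hi.1
    calc (2:ℤ)^(n-t+1) = 2^(n-t) * 2 := by ring
      _ ∣ 2^i * ((x i:ℤ) + z i - k * y i) := mul_dvd_mul h3 h2
      _ = ((x i:ℤ) + z i - k * y i) * 2^i := by ring
  have hSt : Spoly k n x y z t ≤ -(2^(n-t+1)) := by
    have hpos : (0:ℤ) < -Spoly k n x y z t := by omega
    have := Int.le_of_dvd hpos (dvd_neg.mpr hdvd)
    omega
  -- Step 2: split the sum
  have hsub : n - j ≤ n - t := by omega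
  have hle : n - t ≤ n := by omega
  have hsplit : Spoly k n x y z j =
      (∑ i ∈ Finset.Ico (n-j) (n-t), ((x i:ℤ) + z i - k * y i) * 2^i)
        + Spoly k n x y z t := by
    unfold Spoly
    rw [← Finset.sum_union]
    · congr 1
      ext a
      simp only [Finset.mem_Icc, Finset.mem_union, Finset.mem_Ico]
      omega
    · rw [Finset.disjoint_left]
      intro a ha hb
      simp only [Finset.mem_Ico, Finset.mem_Icc] at ha hb
      omega
  -- Step 3: bound the extra terms
  have hgeo : ∀ m : ℕ, ∑ i ∈ Finset.range m, (2:ℤ) * 2^i = 2^(m+1) - 2 := by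
    intro m
    induction m with
    | zero => simp
    | succ m ih => rw [Finset.sum_range_succ, ih]; ring
  have hextra : (∑ i ∈ Finset.Ico (n-j) (n-t), ((x i:ℤ) + z i - k * y i) * 2^i)
      ≤ 2^(n-t+1) - 2 := by
    calc (∑ i ∈ Finset.Ico (n-j) (n-t), ((x i:ℤ) + z i - k * y i) * 2^i)
        ≤ ∑ i ∈ Finset.Ico (n-j) (n-t), (2:ℤ) * 2^i := by
          apply Finset.sum_le_sum
          intro i hi
          simp only [Finset.mem_Ico] at hi
          have hin : i ≤ n := by omega
          have hxi : (x i : ℤ) ≤ 1 := by exact_mod_cast hx i hin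
          have hzi : (z i : ℤ) ≤ 1 := by exact_mod_cast hz i hin
          have hky : (0:ℤ) ≤ (k:ℤ) * y i := by positivity
          have hp : (0:ℤ) < 2^i := by positivity
          nlinarith
      _ ≤ ∑ i ∈ Finset.range (n-t), (2:ℤ) * 2^i := by
          apply Finset.sum_le_sum_of_subset_of_nonneg
          · intro a ha
            simp only [Finset.mem_Ico, Finset.mem_range] at ha ⊢
            omega
          · intro i _ _
            positivity
      _ = 2^(n-t+1) - 2 := hgeo (n-t)
  rw [hsplit]
  linarith
end

section
/- Let k be an odd positive integer, let x, y, z be non-negative integers with binary digits x_i, y_i, z_i for 0 ≤ i ≤ n, and define S_t = Σ_{i=n-t}^n (x_i + z_i - k y_i) 2^i. Suppose x_i XOR y_i XOR z_i = 0 for all i with 0 ≤ i ≤ n-t, and y ≤ floor((x+z)/k). Then S_t ≥ 0. -/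
theorem stmt_5 (k n t : ℕ) (hk : Odd k) (hk0 : 0 < k) (ht : t ≤ n)
    (x y z : ℕ → ℕ)
    (hx : ∀ i ≤ n, x i ≤ 1) (hy : ∀ i ≤ n, y i ≤ 1) (hz : ∀ i ≤ n, z i ≤ 1)
    (X Y Z : ℕ)
    (hX : X = ∑ i ∈ Finset.range (n + 1), x i * 2 ^ i)
    (hY : Y = ∑ i ∈ Finset.range (n + 1), y i * 2 ^ i)
    (hZ : Z = ∑ i ∈ Finset.range (n + 1), z i * 2 ^ i)
    (hxor : ∀ i ≤ n - t, (x i + y i + z i) % 2 = 0)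
    (hyf : Y ≤ (X + Z) / k) :
    0 ≤ Spoly k n x y z t := by
  set m := n - t with hm
  have hmn : m ≤ n := Nat.sub_le n t
  -- k*Y ≤ X+Z
  have hkY : Y * k ≤ X + Z := (Nat.le_div_iff_mul_le hk0).mp hyf
  have hkYZ : (0:ℤ) ≤ (X:ℤ) + Z - k * Y := by
    have h' : ((Y * k : ℕ) : ℤ) ≤ ((X + Z : ℕ) : ℤ) := Int.ofNat_le.mpr hkY
    push_cast at h'
    linarith [h', mul_comm (Y:ℤ) (k:ℤ)]
  -- full sum equals X + Z - k*Y
  have hfull : ∑ i ∈ Finset.range (n+1), ((x i : ℤ) + (z i : ℤ) - (k:ℤ) * (y i : ℤ)) * 2 ^ i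
      = (X : ℤ) + Z - (k:ℤ) * Y := by
    subst hX hY hZ
    push_cast
    rw [Finset.mul_sum, ← Finset.sum_add_distrib, ← Finset.sum_sub_distrib]
    exact Finset.sum_congr rfl fun i _ => by ring
  -- split the full sum
  have hsplit : ∑ i ∈ Finset.range (n+1), ((x i : ℤ) + (z i : ℤ) - (k:ℤ) * (y i : ℤ)) * 2 ^ i
      = (∑ i ∈ Finset.range m, ((x i : ℤ) + (z i : ℤ) - (k:ℤ) * (y i : ℤ)) * 2 ^ i)
        + Spoly k n x y z t := by
    rw [Spoly, ← hm, ← Finset.Ico_add_one_right_eq_Icc, Finset.range_eq_Ico, Finset.range_eq_Ico]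
    exact (Finset.sum_Ico_consecutive (fun i => ((x i : ℤ) + (z i : ℤ) - (k:ℤ) * (y i : ℤ)) * 2 ^ i) (Nat.zero_le m) (k := n + 1) (by omega)).symm
  set L := ∑ i ∈ Finset.range m, ((x i : ℤ) + (z i : ℤ) - (k:ℤ) * (y i : ℤ)) * 2 ^ i with hL
  -- bound on L
  have hgeom : ∀ M : ℕ, ∑ i ∈ Finset.range M, (2:ℤ)^i = 2^M - 1 := by
    intro M
    induction M with
    | zero => simp
    | succ N ih => rw [Finset.sum_range_succ, ih]; ring
  have hLle : L ≤ 2^(m+1) - 2 := by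
    have h1 : L ≤ ∑ i ∈ Finset.range m, 2 * (2:ℤ)^i := by
      apply Finset.sum_le_sum
      intro i hi
      have hin : i ≤ n := le_trans (Nat.le_of_lt_succ (Nat.lt_succ_of_lt (Finset.mem_range.mp hi))) hmn
      have hx1 : (x i : ℤ) ≤ 1 := by exact_mod_cast hx i hin
      have hz1 : (z i : ℤ) ≤ 1 := by exact_mod_cast hz i hin
      have hky : (0:ℤ) ≤ (k:ℤ) * (y i : ℤ) := by positivity
      have hp : (0:ℤ) ≤ 2^i := by positivity
      nlinarith
    rw [← Finset.mul_sum, hgeom m] at h1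
    have hpow : (2:ℤ)^(m+1) = 2 * 2^m := by ring
    linarith
  -- divisibility
  have hdvd : (2:ℤ)^(m+1) ∣ Spoly k n x y z t := by
    rw [Spoly, ← hm]
    apply Finset.dvd_sum
    intro i hi
    rw [Finset.mem_Icc] at hi
    rcases eq_or_lt_of_le hi.1 with h | h
    · -- i = m : coefficient is even
      rw [← h]
      have hpar := hxor m le_rfl
      have h1 : Even ((x m : ℤ) + y m + z m) := by
        rw [Int.even_iff]
        omega
      have h2 : Even ((k:ℤ) + 1) := by
        obtain ⟨j, hj⟩ := hk
        subst hj
        push_cast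
        exact ⟨(j:ℤ)+1, by ring⟩
      have h3 : Even ((x m : ℤ) + z m - k * y m) := by
        have := h1.sub (h2.mul_right (y m : ℤ))
        convert this using 1
        · rfl
        ring
      obtain ⟨c, hc⟩ := h3
      rw [hc]
      exact ⟨c, by ring⟩
    · -- i > m
      have : (2:ℤ)^(m+1) ∣ 2^i := pow_dvd_pow 2 h
      exact this.mul_left _
  -- finish
  have hS : Spoly k n x y z t = ((X:ℤ) + Z - k * Y) - L := by
    rw [← hfull, hsplit]; ring
  by_contra hneg
  push_neg at hneg
  have hpos : 0 < -(Spoly k n x y z t) := by linarith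
  have hle : (2:ℤ)^(m+1) ≤ -(Spoly k n x y z t) :=
    Int.le_of_dvd hpos (dvd_neg.mpr hdvd)
  linarith
end

section
/- Let k be a positive integer, let x_i, y_i, z_i ∈ {0,1} for 0 ≤ i ≤ n, and define S_t = Σ_{i=n-t}^n (x_i + z_i - k y_i) 2^i. If S_t ≥ k·2^{n-t}, then for every natural number j with t < j ≤ n, S_j ≥ k·2^{n-j}. -/
lemma Spoly_step (k n : ℕ) (x y z : ℕ → ℕ) (s : ℕ) (hs : s < n) :
    Spoly k n x y z (s + 1) =
      ((x (n - (s+1)) : ℤ) + (z (n - (s+1)) : ℤ) - (k : ℤ) * (y (n - (s+1)) : ℤ))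
        * 2 ^ (n - (s+1)) + Spoly k n x y z s := by
  have h1 : n - (s+1) < n - s := by omega
  have h2 : Finset.Icc (n - (s+1)) n = insert (n - (s+1)) (Finset.Icc (n - s) n) := by
    ext i
    simp only [Finset.mem_Icc, Finset.mem_insert]
    omega
  rw [Spoly, h2, Finset.sum_insert (by simp [Finset.mem_Icc]; omega)]
  rfl

theorem stmt_6 (k n t : ℕ) (hk : 0 < k) (ht : t ≤ n)
    (x y z : ℕ → ℕ)
    (hx : ∀ i ≤ n, x i ≤ 1) (hy : ∀ i ≤ n, y i ≤ 1) (hz : ∀ i ≤ n, z i ≤ 1)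
    (hS : Spoly k n x y z t ≥ (k : ℤ) * 2 ^ (n - t)) :
    ∀ j, t < j → j ≤ n → Spoly k n x y z j ≥ (k : ℤ) * 2 ^ (n - j) := by
  have main : ∀ j, t ≤ j → j ≤ n → Spoly k n x y z j ≥ (k : ℤ) * 2 ^ (n - j) := by
    intro j hj
    induction j, hj using Nat.le_induction with
    | base => intro _; exact hS
    | succ m hm ih =>
      intro hmn
      have hmlt : m < n := by omega
      have ihm := ih (by omega)
      rw [Spoly_step k n x y z m hmlt]
      set i := n - (m+1) with hi
      have hin : i ≤ n := by omega
      have hx' : (0:ℤ) ≤ (x i : ℤ) := Int.natCast_nonneg _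
      have hz' : (0:ℤ) ≤ (z i : ℤ) := Int.natCast_nonneg _
      have hy' : (y i : ℤ) ≤ 1 := by exact_mod_cast hy i hin
      have hpow : (0:ℤ) < 2 ^ i := by positivity
      have hterm : ((x i : ℤ) + (z i : ℤ) - (k : ℤ) * (y i : ℤ)) * 2 ^ i ≥
          -(k : ℤ) * 2 ^ i := by
        apply mul_le_mul_of_nonneg_right _ hpow.le
        nlinarith [Int.natCast_nonneg k]
      have hsplit : (2:ℤ) ^ (n - m) = 2 * 2 ^ i := by
        rw [hi, ← pow_succ']
        congr 1
        omega
      rw [hsplit] at ihm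
      linarith
  intro j hj hjn
  exact main j hj.le hjn
end

section
/- Let k = 4m+3 for a non-negative integer m, let x_i, y_i, z_i ∈ {0,1} for 0 ≤ i ≤ n, and define S_t = Σ_{i=n-t}^n (x_i + z_i - k y_i) 2^i. Suppose 0 ≤ S_t ≤ 2m·2^{n-t} and t < n. If (x_{n-t-1}, y_{n-t-1}, z_{n-t-1}) = (1,1,0) or (0,1,1), then S_{t+1} < 0. -/
theorem stmt_7 (m n t : ℕ) (ht : t < n)
    (x y z : ℕ → ℕ)
    (hx : ∀ i ≤ n, x i ≤ 1) (hy : ∀ i ≤ n, y i ≤ 1) (hz : ∀ i ≤ n, z i ≤ 1)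
    (hS0 : 0 ≤ Spoly (4 * m + 3) n x y z t)
    (hS1 : Spoly (4 * m + 3) n x y z t ≤ (2 * m : ℤ) * 2 ^ (n - t))
    (hcase : (x (n - t - 1), y (n - t - 1), z (n - t - 1)) = (1, 1, 0) ∨
             (x (n - t - 1), y (n - t - 1), z (n - t - 1)) = (0, 1, 1)) :
    Spoly (4 * m + 3) n x y z (t + 1) < 0 := by
  have h1 : n - (t + 1) = n - t - 1 := by omega
  have h2 : n - t - 1 + 1 = n - t := by omega
  have hins : Finset.Icc (n - (t + 1)) n = insert (n - t - 1) (Finset.Icc (n - t) n) := by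
    ext i
    simp only [Finset.mem_Icc, Finset.mem_insert]
    omega
  have hsplit : Spoly (4 * m + 3) n x y z (t + 1) =
      ((x (n - t - 1) : ℤ) + (z (n - t - 1) : ℤ) - ((4 * m + 3 : ℕ) : ℤ) * (y (n - t - 1) : ℤ))
        * 2 ^ (n - t - 1) + Spoly (4 * m + 3) n x y z t := by
    unfold Spoly
    rw [hins, Finset.sum_insert (by simp; omega)]
  have hpow : (2 : ℤ) ^ (n - t) = 2 * 2 ^ (n - t - 1) := by
    conv_lhs => rw [← h2]
    rw [pow_succ]; ring
  have hxyz : (x (n - t - 1) : ℤ) + (z (n - t - 1) : ℤ)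
      - ((4 * m + 3 : ℕ) : ℤ) * (y (n - t - 1) : ℤ) = -(4 * m + 2) := by
    rcases hcase with h | h <;>
      · simp only [Prod.mk.injEq] at h
        rw [h.1, h.2.1, h.2.2]
        push_cast
        ring
  have hp : (0:ℤ) < 2 ^ (n - t - 1) := by positivity
  rw [hsplit, hxyz]
  rw [hpow] at hS1
  nlinarith [hp]
end

section
/- Let k = 4m+3 for a non-negative integer m, let x_i, y_i, z_i ∈ {0,1} for 0 ≤ i ≤ n, and define S_t = Σ_{i=n-t}^n (x_i + z_i - k y_i) 2^i. Suppose 0 ≤ S_t ≤ 2m·2^{n-t} and t < n. If (x_{n-t-1}, y_{n-t-1}, z_{n-t-1}) = (1,0,1) or (0,0,0), then 0 ≤ S_{t+1} < k·2^{n-t-1}. -/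
theorem stmt_8 (m n t : ℕ) (ht : t < n)
    (x y z : ℕ → ℕ)
    (hx : ∀ i ≤ n, x i ≤ 1) (hy : ∀ i ≤ n, y i ≤ 1) (hz : ∀ i ≤ n, z i ≤ 1)
    (hS0 : 0 ≤ Spoly (4 * m + 3) n x y z t)
    (hS1 : Spoly (4 * m + 3) n x y z t ≤ (2 * m : ℤ) * 2 ^ (n - t))
    (hcase : (x (n - t - 1), y (n - t - 1), z (n - t - 1)) = (1, 0, 1) ∨
             (x (n - t - 1), y (n - t - 1), z (n - t - 1)) = (0, 0, 0)) :
    0 ≤ Spoly (4 * m + 3) n x y z (t + 1) ∧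
      Spoly (4 * m + 3) n x y z (t + 1) < (4 * m + 3 : ℤ) * 2 ^ (n - t - 1) := by
  set j := n - t - 1 with hj
  have hjn : j < n - t := by omega
  have hstep : Spoly (4 * m + 3) n x y z (t + 1) =
      ((x j : ℤ) + (z j : ℤ) - (4 * m + 3 : ℤ) * (y j : ℤ)) * 2 ^ j
        + Spoly (4 * m + 3) n x y z t := by
    unfold Spoly
    have h1 : n - (t + 1) = j := by omega
    have h2 : Finset.Icc j n = insert j (Finset.Icc (n - t) n) := by
      ext i
      simp only [Finset.mem_Icc, Finset.mem_insert]
      omega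
    rw [h1, h2, Finset.sum_insert (by simp [Finset.mem_Icc]; omega)]
    push_cast
    ring_nf
  have hpow : (0 : ℤ) < 2 ^ j := by positivity
  have hpow2 : (2 : ℤ) ^ (n - t) = 2 * 2 ^ j := by
    rw [show n - t = j + 1 by omega]; ring
  rcases hcase with h | h <;>
    simp only [Prod.mk.injEq] at h <;>
    obtain ⟨hxj, hyj, hzj⟩ := h <;>
    rw [hstep, hxj, hyj, hzj] <;> push_cast <;> constructor <;> nlinarith [hS0, hS1]
end

section
/- Let k = 4m+3 for a non-negative integer m, let x_i, y_i, z_i ∈ {0,1} for 0 ≤ i ≤ n, and define S_t = Σ_{i=n-t}^n (x_i + z_i - k y_i) 2^i. Suppose (2m+2)·2^{n-t} ≤ S_t < k·2^{n-t}, x_i XOR y_i XOR z_i = 0 for all i with n-t ≤ i ≤ n, and t < n. If (x_{n-t-1}, y_{n-t-1}, z_{n-t-1}) = (1,1,0) or (0,1,1), then 0 ≤ S_{t+1} < k·2^{n-t-1}. -/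
theorem stmt_9 (m n t : ℕ) (ht : t < n)
    (x y z : ℕ → ℕ)
    (hx : ∀ i ≤ n, x i ≤ 1) (hy : ∀ i ≤ n, y i ≤ 1) (hz : ∀ i ≤ n, z i ≤ 1)
    (hS0 : (2 * m + 2 : ℤ) * 2 ^ (n - t) ≤ Spoly (4 * m + 3) n x y z t)
    (hS1 : Spoly (4 * m + 3) n x y z t < (4 * m + 3 : ℤ) * 2 ^ (n - t))
    (hxor : ∀ i, n - t ≤ i → i ≤ n → (x i + y i + z i) % 2 = 0)
    (hcase : (x (n - t - 1), y (n - t - 1), z (n - t - 1)) = (1, 1, 0) ∨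
             (x (n - t - 1), y (n - t - 1), z (n - t - 1)) = (0, 1, 1)) :
    0 ≤ Spoly (4 * m + 3) n x y z (t + 1) ∧
      Spoly (4 * m + 3) n x y z (t + 1) < (4 * m + 3 : ℤ) * 2 ^ (n - t - 1) := by
  set e := n - t - 1 with he
  have hnt : n - t = e + 1 := by omega
  have hnt1 : n - (t + 1) = e := by omega
  have hen : e + 1 ≤ n := by omega
  -- split the sum for t+1
  have hins : Finset.Icc e n = insert e (Finset.Icc (e + 1) n) := by
    ext i; simp [Finset.mem_Icc, Finset.mem_insert]; omega
  have hstep : Spoly (4 * m + 3) n x y z (t + 1)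
      = ((x e : ℤ) + (z e : ℤ) - ((4 * m + 3 : ℕ) : ℤ) * (y e : ℤ)) * 2 ^ e
        + Spoly (4 * m + 3) n x y z t := by
    rw [Spoly, Spoly, hnt1, hnt, hins, Finset.sum_insert (by simp)]
  -- coefficient at e is 1 - (4m+3)
  have hcoef : ((x e : ℤ) + (z e : ℤ) - ((4 * m + 3 : ℕ) : ℤ) * (y e : ℤ))
      = -(4 * (m : ℤ) + 2) := by
    rcases hcase with h | h <;>
      · simp only [Prod.mk.injEq] at h
        rw [h.1, h.2.1, h.2.2]
        push_cast; ring
  -- divisibility of S_t by 2^(e+2)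
  have hdvd : (2 : ℤ) ^ (e + 2) ∣ Spoly (4 * m + 3) n x y z t := by
    rw [Spoly, hnt]
    apply Finset.dvd_sum
    intro i hi
    rw [Finset.mem_Icc] at hi
    have hxi := hx i hi.2
    have hyi := hy i hi.2
    have hzi := hz i hi.2
    have hp := hxor i (by omega) hi.2
    have h2 : (2 : ℤ) ∣ ((x i : ℤ) + (z i : ℤ) - ((4 * m + 3 : ℕ) : ℤ) * (y i : ℤ)) := by
      have : (2 : ℤ) ∣ ((x i : ℤ) + (y i : ℤ) + (z i : ℤ)) := by
        have : 2 ∣ (x i + y i + z i) := Nat.dvd_of_mod_eq_zero hp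
        exact_mod_cast Int.natCast_dvd_natCast.mpr this
      obtain ⟨c, hc⟩ := this
      refine ⟨c - (2 * m + 2) * (y i : ℤ), ?_⟩
      push_cast at hc ⊢
      linarith
    have h3 : (2 : ℤ) ^ (e + 1) ∣ 2 ^ i := pow_dvd_pow 2 hi.1
    calc (2 : ℤ) ^ (e + 2) = 2 * 2 ^ (e + 1) := by ring
    _ ∣ _ := mul_dvd_mul h2 h3
  obtain ⟨c, hc⟩ := hdvd
  rw [hnt] at hS0 hS1
  rw [hc] at hS0 hS1
  have hP : (0 : ℤ) < 2 ^ e := by positivity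
  have hpe1 : (2 : ℤ) ^ (e + 1) = 2 * 2 ^ e := by ring
  have hpe2 : (2 : ℤ) ^ (e + 2) = 4 * 2 ^ e := by ring
  rw [hpe1, hpe2] at hS0 hS1
  have hc1 : (m : ℤ) + 1 ≤ c := by nlinarith
  have hc2 : 2 * c ≤ 4 * (m : ℤ) + 2 := by nlinarith
  rw [hstep, hcoef, hc, hpe2]
  constructor
  · nlinarith
  · nlinarith
end

section
/- Let k = 4m+3 for a non-negative integer m, let x_i, y_i, z_i ∈ {0,1} for 0 ≤ i ≤ n, and define S_t = Σ_{i=n-t}^n (x_i + z_i - k y_i) 2^i. Suppose (2m+2)·2^{n-t} ≤ S_t < k·2^{n-t} and t < n. If (x_{n-t-1}, y_{n-t-1}, z_{n-t-1}) = (1,0,1) or (0,0,0), then S_{t+1} ≥ k·2^{n-t-1}. -/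
theorem stmt_10 (m n t : ℕ) (ht : t < n)
    (x y z : ℕ → ℕ)
    (hx : ∀ i ≤ n, x i ≤ 1) (hy : ∀ i ≤ n, y i ≤ 1) (hz : ∀ i ≤ n, z i ≤ 1)
    (hS0 : (2 * m + 2 : ℤ) * 2 ^ (n - t) ≤ Spoly (4 * m + 3) n x y z t)
    (hS1 : Spoly (4 * m + 3) n x y z t < (4 * m + 3 : ℤ) * 2 ^ (n - t))
    (hcase : (x (n - t - 1), y (n - t - 1), z (n - t - 1)) = (1, 0, 1) ∨
             (x (n - t - 1), y (n - t - 1), z (n - t - 1)) = (0, 0, 0)) :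
    Spoly (4 * m + 3) n x y z (t + 1) ≥ (4 * m + 3 : ℤ) * 2 ^ (n - t - 1) := by
  have hset : Finset.Icc (n - (t + 1)) n = insert (n - (t + 1)) (Finset.Icc (n - t) n) := by
    rw [← Finset.Ioc_insert_left (by omega : n - (t + 1) ≤ n)]
    congr 1
    rw [← Finset.Icc_add_one_left_eq_Ioc]
    congr 1
    omega
  have hmem : n - (t + 1) ∉ Finset.Icc (n - t) n := by
    simp only [Finset.mem_Icc, not_and_or, not_le]
    left; omega
  have hsplit : Spoly (4 * m + 3) n x y z (t + 1) =
      ((x (n - (t + 1)) : ℤ) + (z (n - (t + 1)) : ℤ)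
        - ((4 * m + 3 : ℕ) : ℤ) * (y (n - (t + 1)) : ℤ)) * 2 ^ (n - (t + 1))
        + Spoly (4 * m + 3) n x y z t := by
    rw [Spoly, hset, Finset.sum_insert hmem, Spoly]
  have he : n - (t + 1) = n - t - 1 := by omega
  have hpow : (2 : ℤ) ^ (n - t) = 2 * 2 ^ (n - t - 1) := by
    rw [← pow_succ']
    congr 1
    omega
  have hppos : (0 : ℤ) < 2 ^ (n - t - 1) := by positivity
  rcases hcase with h | h <;>
  · simp only [Prod.mk.injEq] at h
    obtain ⟨h1, h2, h3⟩ := h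
    rw [hsplit, he, h1, h2, h3]
    push_cast
    rw [hpow] at hS0
    nlinarith [hppos]
end

section
/- Let k = 4m+3 for a non-negative integer m and let f(x,z) = floor((x+z)/k). Suppose x, y, z are non-negative integers with XOR x ⊕ y ⊕ z ≠ 0 and y ≤ f(x,z). Then at least one of the following holds: (1) there exists u < x with u ⊕ y ⊕ z = 0; (2) there exist u < x and v < y with v = f(u,z) and u ⊕ v ⊕ z = 0; (3) there exists v < y with x ⊕ v ⊕ z = 0; (4) there exists w < z with y ≤ f(x,w) and x ⊕ y ⊕ w = 0; (5) there exist v < y and w < z with v = f(x,w) and x ⊕ v ⊕ w = 0. -/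
/-- splitting xor at a power of two -/
lemma xor_split (n a b r s : ℕ) (hr : r < 2 ^ n) (hs : s < 2 ^ n) :
    (2 ^ n * a + r) ^^^ (2 ^ n * b + s) = 2 ^ n * (a ^^^ b) + (r ^^^ s) := by
  have hrs : r ^^^ s < 2 ^ n := Nat.xor_lt_two_pow hr hs
  apply Nat.eq_of_testBit_eq
  intro j
  rw [Nat.testBit_xor, Nat.testBit_two_pow_mul_add _ hr, Nat.testBit_two_pow_mul_add _ hs,
    Nat.testBit_two_pow_mul_add _ hrs]
  by_cases h : j < n <;> simp [h, Nat.testBit_xor]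

lemma xor_low (j u : ℕ) (hu : u < 2 ^ j) : u ^^^ (2 ^ j - 1) = 2 ^ j - 1 - u := by
  induction j generalizing u with
  | zero => interval_cases u; simp
  | succ j ih =>
    have h2 : (0:ℕ) < 2 ^ j := Nat.two_pow_pos j
    have hq : u / 2 < 2 ^ j := by
      rw [Nat.div_lt_iff_lt_mul (by norm_num)]
      calc u < 2 ^ (j+1) := hu
        _ = 2 ^ j * 2 := by ring
    have hu2 : u % 2 < 2 := Nat.mod_lt _ (by norm_num)
    have e1 : u = 2 * (u / 2) + u % 2 := by omega
    have e2 : 2 ^ (j+1) - 1 = 2 * (2 ^ j - 1) + 1 := by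
      have : (1:ℕ) ≤ 2 ^ j := h2
      rw [pow_succ]; omega
    have key : (2 * (u / 2) + u % 2) ^^^ (2 * (2 ^ j - 1) + 1) =
        2 * ((u / 2) ^^^ (2 ^ j - 1)) + ((u % 2) ^^^ 1) := by
      have := xor_split 1 (u / 2) (2 ^ j - 1) (u % 2) 1 (by omega) (by norm_num)
      simpa using this
    rw [e1, e2, key, ih _ hq]
    have h3 : u % 2 ^^^ 1 = 1 - u % 2 := by interval_cases h : u % 2 <;> simp
    rw [h3]
    have : (1:ℕ) ≤ 2 ^ j := h2
    omega

lemma xor_pow (j u : ℕ) (hu : u < 2 ^ j) : u ^^^ 2 ^ j = 2 ^ j + u := by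
  have := xor_split j 0 1 u 0 hu (Nat.two_pow_pos j)
  simpa [Nat.xor_comm] using this

lemma xor_pow' (j u : ℕ) (hu : u < 2 ^ j) : (2 ^ j + u) ^^^ 2 ^ j = u := by
  have h := xor_pow j u hu
  calc (2 ^ j + u) ^^^ 2 ^ j = (u ^^^ 2 ^ j) ^^^ 2 ^ j := by rw [h]
    _ = u := by rw [Nat.xor_assoc, Nat.xor_self, Nat.xor_zero]

lemma trailing (y : ℕ) (hy : y ≠ 0) : ∃ j b, y = 2 ^ (j+1) * b + 2 ^ j := by
  induction y using Nat.strong_induction_on with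
  | _ y ih =>
    rcases Nat.even_or_odd y with he | ho
    · obtain ⟨c, hc⟩ := he
      have hc' : y = 2 * c := by omega
      have hcne : c ≠ 0 := by rintro rfl; omega
      obtain ⟨j, b, hb⟩ := ih c (by omega) hcne
      exact ⟨j + 1, b, by rw [hc', hb]; ring⟩
    · obtain ⟨c, hc⟩ := ho
      exact ⟨0, c, by rw [hc]; norm_num⟩

/-- The key step lemma, using k = 4m+3. -/
lemma step (m x y : ℕ) (hy : y ≠ 0) (h : x + (x ^^^ y) < (4*m+3) * y) :
    x + (x ^^^ (y-1)) < (4*m+3) * y := by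
  obtain ⟨j, b, hb⟩ := trailing y hy
  have h2pos : (0:ℕ) < 2 ^ j := Nat.two_pow_pos j
  obtain ⟨a, xl, hx, hxlt⟩ : ∃ a xl, x = 2 ^ (j+1) * a + xl ∧ xl < 2 ^ (j+1) :=
    ⟨_, _, (Nat.div_add_mod x _).symm, Nat.mod_lt _ (Nat.two_pow_pos _)⟩
  have hPlt : 2 ^ j < 2 ^ (j+1) := by rw [pow_succ]; omega
  have hy1 : y - 1 = 2 ^ (j+1) * b + (2 ^ j - 1) := by omega
  have hX : x ^^^ y = 2 ^ (j+1) * (a ^^^ b) + (xl ^^^ 2 ^ j) := by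
    rw [hx, hb]; exact xor_split _ _ _ _ _ hxlt hPlt
  have hX' : x ^^^ (y-1) = 2 ^ (j+1) * (a ^^^ b) + (xl ^^^ (2 ^ j - 1)) := by
    rw [hx, hy1]; exact xor_split _ _ _ _ _ hxlt (by omega)
  by_cases hcase : xl < 2 ^ j
  · -- bit j of x is 0 : the xor strictly decreases
    have e1 : xl ^^^ 2 ^ j = 2 ^ j + xl := xor_pow j xl hcase
    have e2 : xl ^^^ (2 ^ j - 1) = 2 ^ j - 1 - xl := xor_low j xl hcase
    have : x ^^^ (y - 1) ≤ x ^^^ y := by rw [hX, hX', e1, e2]; omega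
    omega
  · -- bit j of x is 1
    obtain ⟨u, hult, hxlu⟩ : ∃ u, u < 2 ^ j ∧ xl = 2 ^ j + u := ⟨xl - 2 ^ j, by omega, by omega⟩
    have e1 : xl ^^^ 2 ^ j = u := by rw [hxlu]; exact xor_pow' j u hult
    have e2 : xl ^^^ (2 ^ j - 1) = 2 ^ j + (2 ^ j - 1 - u) := by
      rw [hxlu]
      have hh := xor_split j 1 0 u (2 ^ j - 1) hult (by omega)
      simp only [Nat.xor_zero, mul_one, mul_zero, zero_add] at hh
      rw [hh, xor_low j u hult]
    rw [e1] at hX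
    rw [e2] at hX'
    -- pass to integers
    have hxz : (x:ℤ) = 2 * 2 ^ j * a + 2 ^ j + u := by
      rw [hx, hxlu]; push_cast; ring
    have hyz : (y:ℤ) = 2 * 2 ^ j * b + 2 ^ j := by
      rw [hb]; push_cast; ring
    have hXz : ((x ^^^ y : ℕ):ℤ) = 2 * 2 ^ j * (a ^^^ b : ℕ) + u := by
      rw [hX]; push_cast; ring
    have hsub : ((2 ^ j - 1 - u : ℕ) : ℤ) = ((2 ^ j : ℕ) : ℤ) - 1 - (u:ℤ) := by omega
    have hX'z : ((x ^^^ (y-1) : ℕ):ℤ) = 2 * 2 ^ j * (a ^^^ b : ℕ) + 2 * 2 ^ j - 1 - u := by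
      rw [hX']; push_cast [hsub]; ring
    -- parity
    have hpar : (a ^^^ b) % 2 = (a + b) % 2 := Nat.xor_mod_two_eq
    have heven : (2:ℤ) ∣ ((a:ℤ) + b - (a ^^^ b : ℕ)) := by omega
    obtain ⟨d, hd⟩ := heven
    have ht : (4*(m:ℤ)+3) * b - a - (a ^^^ b : ℕ) + 2*m + 1
        = 2 * ((2*(m:ℤ)+1) * b - a + d + m) + 1 := by linear_combination hd
    have h' : (x:ℤ) + (x ^^^ y : ℕ) < (4*(m:ℤ)+3) * y := by exact_mod_cast h
    have hDeq : (4*(m:ℤ)+3) * y - ((x:ℤ) + (x ^^^ y : ℕ))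
        = 2 * 2 ^ j * (2 * ((2*(m:ℤ)+1) * b - a + d + m) + 1) - 2 * u := by
      rw [hxz, hyz, hXz, ← ht]; ring
    set t : ℤ := (2*(m:ℤ)+1) * b - a + d + m with htdef
    have hpz : (0:ℤ) < 2 ^ j := by positivity
    have huz : (0:ℤ) ≤ (u:ℤ) := Int.natCast_nonneg u
    have hDge : (1:ℤ) ≤ 2 * 2 ^ j * (2*t+1) - 2*u := by
      rw [← hDeq]; linarith [h']
    have ht0 : 0 ≤ t := by
      by_contra hneg
      push_neg at hneg
      have h1 : (2*t+1 : ℤ) ≤ -1 := by omega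
      have h2 : (2 * (2:ℤ) ^ j) * (2*t+1) ≤ (2 * (2:ℤ) ^ j) * (-1) :=
        mul_le_mul_of_nonneg_left h1 (by positivity)
      linarith [hDge, h2, huz, hpz]
    have hfin : (x:ℤ) + (x ^^^ (y-1) : ℕ) < (4*(m:ℤ)+3) * y := by
      rw [hX'z]
      have h5 : 0 ≤ (2:ℤ) ^ j * t := mul_nonneg (le_of_lt hpz) ht0
      linarith [hDeq, hXz, h5]
    exact_mod_cast hfin

/-- existence of a "fixed point" below y -/
lemma fixedpt (m x y : ℕ) (h : x + (x ^^^ y) < (4*m+3) * y) :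
    ∃ v < y, (4*m+3) * v ≤ x + (x ^^^ v) ∧ x + (x ^^^ v) < (4*m+3) * (v+1) := by
  induction y with
  | zero => simp at h
  | succ n ih =>
    have hs := step m x (n+1) (by omega) h
    have hn : n + 1 - 1 = n := rfl
    rw [hn] at hs
    by_cases hlo : (4*m+3) * n ≤ x + (x ^^^ n)
    · exact ⟨n, by omega, hlo, hs⟩
    · obtain ⟨v, hv1, hv2, hv3⟩ := ih (by omega)
      exact ⟨v, by omega, hv2, hv3⟩

theorem stmt_11 (m x y z : ℕ)
    (h1 : x ^^^ y ^^^ z ≠ 0)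
    (h2 : y ≤ (x + z) / (4 * m + 3)) :
    (∃ u < x, u ^^^ y ^^^ z = 0) ∨
    (∃ u < x, ∃ v < y, v = (u + z) / (4 * m + 3) ∧ u ^^^ v ^^^ z = 0) ∨
    (∃ v < y, x ^^^ v ^^^ z = 0) ∨
    (∃ w < z, y ≤ (x + w) / (4 * m + 3) ∧ x ^^^ y ^^^ w = 0) ∨
    (∃ v < y, ∃ w < z, v = (x + w) / (4 * m + 3) ∧ x ^^^ v ^^^ w = 0) := by
  have hkpos : 0 < 4 * m + 3 := by omega
  have hyk : (4 * m + 3) * y ≤ x + z := by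
    have h := (Nat.le_div_iff_mul_le hkpos).mp h2
    calc (4 * m + 3) * y = y * (4 * m + 3) := Nat.mul_comm _ _
      _ ≤ x + z := h
  rcases Nat.xor_trichotomy h1 with hx | hy | hz
  · -- y ^^^ z < x
    refine Or.inl ⟨y ^^^ z, hx, ?_⟩
    rw [Nat.xor_assoc (y ^^^ z) y z, Nat.xor_self]
  · -- z ^^^ x < y
    refine Or.inr (Or.inr (Or.inl ⟨z ^^^ x, hy, ?_⟩))
    rw [Nat.xor_comm z x, Nat.xor_xor_cancel_left, Nat.xor_self]
  · -- x ^^^ y < z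
    by_cases h4 : (4 * m + 3) * y ≤ x + (x ^^^ y)
    · refine Or.inr (Or.inr (Or.inr (Or.inl ⟨x ^^^ y, hz, ?_, Nat.xor_self _⟩)))
      refine (Nat.le_div_iff_mul_le hkpos).mpr ?_
      calc y * (4 * m + 3) = (4 * m + 3) * y := Nat.mul_comm _ _
        _ ≤ x + (x ^^^ y) := h4
    · obtain ⟨v, hvy, hv1, hv2⟩ := fixedpt m x y (by omega)
      have hwz : x ^^^ v < z := by
        by_contra hle
        have hzle : z ≤ x ^^^ v := Nat.le_of_not_lt hle
        have hA : (4 * m + 3) * (v + 1) ≤ (4 * m + 3) * y :=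
          Nat.mul_le_mul_left _ (by omega)
        have hB : x + z ≤ x + (x ^^^ v) := by omega
        have : (4 * m + 3) * (v + 1) < (4 * m + 3) * (v + 1) :=
          lt_of_le_of_lt (le_trans hA (le_trans hyk hB)) hv2
        exact absurd this (lt_irrefl _)
      refine Or.inr (Or.inr (Or.inr (Or.inr ⟨v, hvy, x ^^^ v, hwz, ?_, Nat.xor_self _⟩)))
      symm
      refine Nat.div_eq_of_lt_le ?_ ?_
      · calc v * (4 * m + 3) = (4 * m + 3) * v := Nat.mul_comm _ _
          _ ≤ x + (x ^^^ v) := hv1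
      · calc x + (x ^^^ v) < (4 * m + 3) * (v + 1) := hv2
          _ = (v + 1) * (4 * m + 3) := Nat.mul_comm _ _
end

section
/- Let k = 4m+3 for a non-negative integer m and let f(x,z) = floor((x+z)/k). Suppose x, y, z are non-negative integers with x ⊕ y ⊕ z = 0 and y ≤ f(x,z). Then: (1) u ⊕ y ⊕ z ≠ 0 for all u < x; (2) u ⊕ v ⊕ z ≠ 0 for all u < x, v < y with v = f(u,z); (3) x ⊕ v ⊕ z ≠ 0 for all v < y; (4) x ⊕ y ⊕ w ≠ 0 for all w < z with y ≤ f(x,w); (5) x ⊕ v ⊕ w ≠ 0 for all v < y, w < z with v = f(x,w). -/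
lemma myXorDiv (a b : ℕ) : (a ^^^ b) / 2 = a / 2 ^^^ b / 2 := by
  apply Nat.eq_of_testBit_eq; intro i
  simp [Nat.testBit_div_two]

lemma myAndDiv (a b : ℕ) : (a &&& b) / 2 = a / 2 &&& b / 2 := by
  apply Nat.eq_of_testBit_eq; intro i
  simp [Nat.testBit_div_two]

lemma myAndMod (a b : ℕ) : (a &&& b) % 2 = 1 ↔ (a % 2 = 1 ∧ b % 2 = 1) := by
  have h := Nat.testBit_and a b 0
  simp only [Nat.testBit_zero, Bool.and_eq_true, decide_eq_true_eq] at h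
  rcases Nat.mod_two_eq_zero_or_one a with ha | ha <;>
    rcases Nat.mod_two_eq_zero_or_one b with hb | hb <;>
      simp [ha, hb] at h ⊢

lemma myAddEq (a b : ℕ) : a + b = (a ^^^ b) + 2 * (b &&& a) := by
  induction a using Nat.strong_induction_on generalizing b with
  | _ a ih =>
    rcases Nat.eq_zero_or_pos a with h | h
    · subst h; simp
    · have h2 := ih (a / 2) (Nat.div_lt_self h one_lt_two) (b / 2)
      have hx := myXorDiv a b
      have ha := myAndDiv b a
      have hxm : (a ^^^ b) % 2 = (a + b) % 2 := Nat.xor_mod_two_eq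
      have ham := myAndMod b a
      omega

lemma myKey (m : ℕ) : ∀ y v z : ℕ, v < y → v ^^^ z < y ^^^ z →
    (2*m+1) * y + (z &&& y) ≤ z →
    (2*m+1) * v + (z &&& v) ≤ z →
    z ≤ (2*m+1) * (v+1) + (z &&& v) → False := by
  intro y
  induction y using Nat.strong_induction_on with
  | _ y ih =>
    intro v z h1 h2 h3 h4 h5
    have ey : (2*m+1) * y = 2 * ((2*m+1) * (y/2)) + (2*m+1) * (y % 2) := by
      conv_lhs => rw [← Nat.div_add_mod y 2]
      ring
    have ev : (2*m+1) * v = 2 * ((2*m+1) * (v/2)) + (2*m+1) * (v % 2) := by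
      conv_lhs => rw [← Nat.div_add_mod v 2]
      ring
    have e5 : (2*m+1) * (v+1) = (2*m+1) * v + (2*m+1) := by ring
    have e5h : (2*m+1) * (v/2+1) = (2*m+1) * (v/2) + (2*m+1) := by ring
    have a1 : (z &&& y) / 2 = z/2 &&& y/2 := myAndDiv z y
    have a2 := myAndMod z y
    have b1 : (z &&& v) / 2 = z/2 &&& v/2 := myAndDiv z v
    have b2 := myAndMod z v
    have x1 : (v ^^^ z) / 2 = v/2 ^^^ z/2 := myXorDiv v z
    have x2 : (v ^^^ z) % 2 = (v + z) % 2 := Nat.xor_mod_two_eq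
    have y1 : (y ^^^ z) / 2 = y/2 ^^^ z/2 := myXorDiv y z
    have y2 : (y ^^^ z) % 2 = (y + z) % 2 := Nat.xor_mod_two_eq
    rcases Nat.mod_two_eq_zero_or_one y with hy | hy <;> rw [hy] at ey <;>
      rcases Nat.mod_two_eq_zero_or_one v with hv | hv <;> rw [hv] at ev <;>
      simp only [Nat.mul_zero, Nat.mul_one, Nat.add_zero] at ey ev <;>
    by_cases hvy : v/2 = y/2
    case pos | pos | pos | pos =>
      rw [hvy] at ev b1 x1
      omega
    all_goals {
      have hl : v/2 < y/2 := by omega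
      have hx2 : v/2 ^^^ z/2 < y/2 ^^^ z/2 := by
        have hle : (v ^^^ z)/2 ≤ (y ^^^ z)/2 := Nat.div_le_div_right (le_of_lt h2)
        rw [x1, y1] at hle
        rcases lt_or_eq_of_le hle with h | h
        · exact h
        · exfalso
          have := congrArg (· ^^^ (z/2)) h
          simp only [xor_cancel_right] at this
          exact hvy this
      exact ih (y/2) (Nat.div_lt_self (by omega) one_lt_two) (v/2) (z/2)
        hl hx2 (by omega) (by omega) (by omega)
    }

theorem stmt_12 (m x y z : ℕ)
    (h1 : x ^^^ y ^^^ z = 0)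
    (h2 : y ≤ (x + z) / (4 * m + 3)) :
    (∀ u < x, u ^^^ y ^^^ z ≠ 0) ∧
    (∀ u < x, ∀ v < y, v = (u + z) / (4 * m + 3) → u ^^^ v ^^^ z ≠ 0) ∧
    (∀ v < y, x ^^^ v ^^^ z ≠ 0) ∧
    (∀ w < z, y ≤ (x + w) / (4 * m + 3) → x ^^^ y ^^^ w ≠ 0) ∧
    (∀ v < y, ∀ w < z, v = (x + w) / (4 * m + 3) → x ^^^ v ^^^ w ≠ 0) := by
  have hk : 0 < 4 * m + 3 := by omega
  have cancelR : ∀ a b c : ℕ, a ^^^ c = b ^^^ c → a = b := by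
    intro a b c h
    have := congrArg (· ^^^ c) h
    simpa only [xor_cancel_right] using this
  have cancelL : ∀ a b c : ℕ, a ^^^ b = a ^^^ c → b = c := by
    intro a b c h
    have := congrArg (a ^^^ ·) h
    simpa only [xor_cancel_left] using this
  have hxy : x ^^^ y = z := xor_eq_zero_iff.mp h1
  have hx : x = y ^^^ z := by
    rw [← hxy, Nat.xor_comm x y, xor_cancel_left]
  have h2' : y * (4 * m + 3) ≤ x + z := (Nat.le_div_iff_mul_le hk).mp h2
  have idyz : y + z = (y ^^^ z) + 2 * (z &&& y) := myAddEq y z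
  have br1 : y * (4 * m + 3) = 2 * ((2 * m + 1) * y) + y := by ring
  refine ⟨?_, ?_, ?_, ?_, ?_⟩
  · intro u hu h
    have : u ^^^ y = z := xor_eq_zero_iff.mp h
    have : u = x := cancelR u x y (by rw [this, hxy])
    omega
  · intro u hu v hv hveq h
    have hu2 : u = v ^^^ z := by
      have h' : u ^^^ v = z := xor_eq_zero_iff.mp h
      rw [← h', Nat.xor_comm u v, xor_cancel_left]
    have hlt : v ^^^ z < y ^^^ z := by rw [← hu2, ← hx]; exact hu
    have hd := Nat.div_add_mod (u + z) (4 * m + 3)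
    have hm : (u + z) % (4 * m + 3) < 4 * m + 3 := Nat.mod_lt _ hk
    rw [← hveq] at hd
    have idvz : v + z = (v ^^^ z) + 2 * (z &&& v) := myAddEq v z
    have br2 : (4 * m + 3) * v = 2 * ((2 * m + 1) * v) + v := by ring
    have br3 : (2 * m + 1) * (v + 1) = (2 * m + 1) * v + (2 * m + 1) := by ring
    exact myKey m y v z hv hlt (by omega) (by omega) (by omega)
  · intro v hv h
    have : x ^^^ v = z := xor_eq_zero_iff.mp h
    have : v = y := cancelL x v y (by rw [this, hxy])
    omega
  · intro w hw _ h
    have : x ^^^ y = w := xor_eq_zero_iff.mp h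
    omega
  · intro v hv w hw hveq h
    have hw2 : x ^^^ v = w := xor_eq_zero_iff.mp h
    have hc1 : y ^^^ x = x ^^^ y := Nat.xor_comm y x
    have hc2 : v ^^^ x = x ^^^ v := Nat.xor_comm v x
    have hlt : v ^^^ x < y ^^^ x := by rw [hc1, hc2, hxy, hw2]; exact hw
    have hd := Nat.div_add_mod (x + w) (4 * m + 3)
    have hm : (x + w) % (4 * m + 3) < 4 * m + 3 := Nat.mod_lt _ hk
    rw [← hveq] at hd
    have idyx : y + x = (y ^^^ x) + 2 * (x &&& y) := myAddEq y x
    have idvx : v + x = (v ^^^ x) + 2 * (x &&& v) := myAddEq v x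
    have br2 : (4 * m + 3) * v = 2 * ((2 * m + 1) * v) + v := by ring
    have br3 : (2 * m + 1) * (v + 1) = (2 * m + 1) * v + (2 * m + 1) := by ring
    exact myKey m y v x hv hlt (by omega) (by omega) (by omega)
end

section
/- The set A = {(x,y,z) ∈ Z_{≥0}^3 : x ⊕ y ⊕ z = 0, y ≤ floor((x+z)/k)} with k = 4m+3 is closed under no move of the chocolate-bar game: every move from a position in A (moves as in move_f) leads to a position outside A, and from every valid position outside A with y ≤ floor((x+z)/k) there is a move into A. -/
section helpers

private lemma xor_decomp (a b : ℕ) : a ^^^ b = 2 * (a / 2 ^^^ b / 2) + (a + b) % 2 := by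
  have h2 : (a ^^^ b) / 2 = a / 2 ^^^ b / 2 := by
    apply Nat.eq_of_testBit_eq
    intro i
    simp [Nat.testBit_div_two, Nat.testBit_xor]
  have h3 := Nat.xor_mod_two_eq (m := a) (n := b)
  omega

private lemma odd_mul_mod (k a : ℕ) (hk : k % 2 = 1) : (k * a) % 2 = a % 2 := by
  have h := Nat.mul_mod k a 2
  rw [hk] at h
  omega

/-- The key arithmetic property of `k ≡ 3 (mod 4)`. -/
private lemma key (k : ℕ) (hk : k % 4 = 3) : ∀ t z : ℕ,
    (k * (t + 1) ≤ ((t + 1) ^^^ z) + z ↔ k * (t + 1) < (t ^^^ z) + z) := by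
  intro t
  induction t using Nat.strong_induction_on with
  | _ t ih =>
    intro z
    have hk2 : k % 2 = 1 := by omega
    rcases Nat.even_or_odd t with ⟨t', rfl⟩ | ⟨t', rfl⟩
    · have e1 := xor_decomp (t' + t' + 1) z
      have e0 := xor_decomp (t' + t') z
      have d1 : (t' + t' + 1) / 2 = t' := by omega
      have d0 : (t' + t') / 2 = t' := by omega
      rw [d1] at e1
      rw [d0] at e0
      have hX := Nat.xor_mod_two_eq (m := t') (n := z / 2)
      have hkt : k * (t' + t' + 1) = 2 * (k * t') + k := by ring
      have hP := odd_mul_mod k t' hk2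
      omega
    · have e1 := xor_decomp (2 * t' + 1 + 1) z
      have e0 := xor_decomp (2 * t' + 1) z
      have d1 : (2 * t' + 1 + 1) / 2 = t' + 1 := by omega
      have d0 : (2 * t' + 1) / 2 = t' := by omega
      rw [d1] at e1
      rw [d0] at e0
      have hX1 := Nat.xor_mod_two_eq (m := t' + 1) (n := z / 2)
      have hX0 := Nat.xor_mod_two_eq (m := t') (n := z / 2)
      have hkt : k * (2 * t' + 1 + 1) = 2 * (k * (t' + 1)) := by ring
      have hB := odd_mul_mod k (t' + 1) hk2
      have IH := ih t' (by omega) (z / 2)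
      omega

private lemma good_mono (k : ℕ) (hk : k % 4 = 3) {z : ℕ} :
    ∀ s, k * s ≤ (s ^^^ z) + z → ∀ t ≤ s, k * t ≤ (t ^^^ z) + z := by
  intro s
  induction s with
  | zero => intro _ t ht; interval_cases t; simp
  | succ s ihs =>
    intro hs t ht
    rcases Nat.eq_or_lt_of_le ht with rfl | h
    · exact hs
    · have hgs : k * s ≤ (s ^^^ z) + z := by
        have h1 := (key k hk s z).mp hs
        have h2 : k * s ≤ k * (s + 1) := Nat.mul_le_mul_left k (Nat.le_succ s)
        omega
      exact ihs hgs t (by omega)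

private lemma good_le_exact (k : ℕ) (hk : k % 4 = 3) {z s t : ℕ}
    (hs : k * s ≤ (s ^^^ z) + z) (ht2 : (t ^^^ z) + z < k * (t + 1)) : s ≤ t := by
  by_contra h
  have h1 : k * (t + 1) ≤ ((t + 1) ^^^ z) + z := good_mono k hk s hs (t + 1) (by omega)
  have := (key k hk t z).mp h1
  omega

private lemma parity_F (t z : ℕ) : ((t ^^^ z) + z) % 2 = t % 2 := by
  have := Nat.xor_mod_two_eq (m := t) (n := z); omega

private lemma exists_exact (k : ℕ) (hk : k % 4 = 3) :
    ∀ y z, ¬ (k * y ≤ (y ^^^ z) + z) →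
    ∃ t, t < y ∧ k * t ≤ (t ^^^ z) + z ∧ (t ^^^ z) + z < k * (t + 1) := by
  intro y
  induction y with
  | zero => intro z h; exact absurd (by simp) h
  | succ y ihy =>
    intro z h
    by_cases hg : k * y ≤ (y ^^^ z) + z
    · refine ⟨y, by omega, hg, ?_⟩
      have h2 : ¬ (k * (y + 1) < (y ^^^ z) + z) := fun hc => h ((key k hk y z).mpr hc)
      have hp1 := parity_F y z
      have hp2 := odd_mul_mod k (y + 1) (by omega)
      omega
    · obtain ⟨t, h1, h2⟩ := ihy z hg; exact ⟨t, by omega, h2⟩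

private lemma xor_disj : ∀ x y z : ℕ, y < x ^^^ z → (y ^^^ z) < x ∨ (y ^^^ x) < z := by
  intro x
  induction x using Nat.strong_induction_on with
  | _ x ih =>
    intro y z hlt
    rcases Nat.eq_zero_or_pos x with rfl | hx
    · right; simpa using hlt
    · have exz := xor_decomp x z
      have eyz := xor_decomp y z
      have eyx := xor_decomp y x
      by_cases hc : y / 2 < x / 2 ^^^ z / 2
      · rcases ih (x / 2) (by omega) (y / 2) (z / 2) hc with h | h
        · left; omega
        · right; omega
      · have hyX : y / 2 = x / 2 ^^^ z / 2 := by omega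
        rcases Nat.mod_two_eq_zero_or_one x with hx0 | hx1
        · right
          have hz : y / 2 ^^^ x / 2 = z / 2 := by
            rw [hyX, Nat.xor_comm (x / 2), Nat.xor_xor_cancel_right]
          rw [hz] at eyx
          omega
        · left
          have hz : y / 2 ^^^ z / 2 = x / 2 := by
            rw [hyX, Nat.xor_xor_cancel_right]
          rw [hz] at eyz
          omega

private lemma div_bounds (K n : ℕ) (h : 0 < K) : K * (n / K) ≤ n ∧ n < K * (n / K) + K := by
  have h1 := Nat.div_add_mod n K
  have h2 := Nat.mod_lt n h
  omega

private lemma div_eq_exact {K t n : ℕ} (h1 : K * t ≤ n) (h2 : n < K * (t + 1)) : n / K = t := by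
  refine Nat.div_eq_of_lt_le ?_ ?_
  · rw [Nat.mul_comm]; exact h1
  · rw [Nat.mul_comm]; exact h2

private lemma le_div' {K y n : ℕ} (h0 : 0 < K) : y ≤ n / K ↔ K * y ≤ n := by
  rw [Nat.le_div_iff_mul_le h0, Nat.mul_comm]

private lemma xor3_eq {a b c : ℕ} (h : a ^^^ b ^^^ c = 0) : b = a ^^^ c := by
  have h1 : a ^^^ b = c := Nat.xor_eq_zero_iff.mp h
  have h2 := congrArg (a ^^^ ·) h1
  simpa [Nat.xor_xor_cancel_left] using h2

private lemma xor_left_cancel {a b c : ℕ} (h : a ^^^ b = a ^^^ c) : b = c := by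
  have h2 := congrArg (a ^^^ ·) h
  simpa [Nat.xor_xor_cancel_left] using h2

end helpers

/-- Moves of the three-dimensional chocolate-bar game with `f x z = (x + z) / k`. -/
def moveF (k : ℕ) (p : ℕ × ℕ × ℕ) : Set (ℕ × ℕ × ℕ) :=
  {q | (∃ u < p.1, q = (u, min ((u + p.2.2) / k) p.2.1, p.2.2)) ∨
       (∃ v < p.2.1, q = (p.1, v, p.2.2)) ∨
       (∃ w < p.2.2, q = (p.1, min p.2.1 ((p.1 + w) / k), w))}

/-- The candidate set of P-positions: nim-sum zero valid positions. -/
def Aset (k : ℕ) : Set (ℕ × ℕ × ℕ) :=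
  {p | p.1 ^^^ p.2.1 ^^^ p.2.2 = 0 ∧ p.2.1 ≤ (p.1 + p.2.2) / k}

private theorem main_thm (K : ℕ) (hk : K % 4 = 3) :
    (∀ p ∈ Aset K, ∀ q ∈ moveF K p, q ∉ Aset K) ∧
    (∀ p : ℕ × ℕ × ℕ, p.2.1 ≤ (p.1 + p.2.2) / K → p ∉ Aset K →
      ∃ q ∈ moveF K p, q ∈ Aset K) := by
  have hk0 : 0 < K := by omega
  constructor
  · rintro ⟨x, y, z⟩ hp q hq hqA
    simp only [Aset, Set.mem_setOf_eq] at hp hqA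
    simp only [moveF, Set.mem_setOf_eq] at hq
    obtain ⟨hxor, hyle⟩ := hp
    have hy : y = x ^^^ z := xor3_eq hxor
    have hval : K * (x ^^^ z) ≤ x + z := by
      have := (le_div' hk0).mp hyle
      rw [hy] at this; exact this
    have hgood : K * (x ^^^ z) ≤ ((x ^^^ z) ^^^ z) + z := by
      rw [Nat.xor_xor_cancel_right]; exact hval
    have hgood' : K * (z ^^^ x) ≤ ((z ^^^ x) ^^^ x) + x := by
      rw [Nat.xor_xor_cancel_right, Nat.xor_comm z x, Nat.add_comm z x]; exact hval
    rcases hq with ⟨u, hu, rfl⟩ | ⟨v, hv, rfl⟩ | ⟨w, hw, rfl⟩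
    · obtain ⟨q1, -⟩ := hqA
      have hteq : min ((u + z) / K) y = u ^^^ z := xor3_eq q1
      rcases le_total ((u + z) / K) y with hle | hle
      · have hdveq : (u + z) / K = u ^^^ z := by
          rw [← min_eq_left hle, hteq]
        have hb := div_bounds K (u + z) hk0
        rw [hdveq] at hb
        have he2 : ((u ^^^ z) ^^^ z) + z < K * ((u ^^^ z) + 1) := by
          rw [Nat.xor_xor_cancel_right]
          have : K * ((u ^^^ z) + 1) = K * (u ^^^ z) + K := by ring
          omega
        have hle2 : x ^^^ z ≤ u ^^^ z := good_le_exact K hk hgood he2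
        have hle3 : u ^^^ z ≤ y := by rw [← hdveq]; exact hle
        have heq : u ^^^ z = x ^^^ z := by omega
        have := Nat.xor_left_inj.mp heq
        omega
      · have hyeq : y = u ^^^ z := by rw [← min_eq_right hle, hteq]
        rw [hy] at hyeq
        have := Nat.xor_left_inj.mp hyeq.symm
        omega
    · obtain ⟨q1, -⟩ := hqA
      have : v = x ^^^ z := xor3_eq q1
      omega
    · obtain ⟨q1, -⟩ := hqA
      have hteq : min y ((x + w) / K) = x ^^^ w := xor3_eq q1
      rcases le_total ((x + w) / K) y with hle | hle
      · have hdveq : (x + w) / K = x ^^^ w := by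
          rw [← min_eq_right hle, hteq]
        have hb := div_bounds K (x + w) hk0
        rw [hdveq] at hb
        have hxw : (x ^^^ w) ^^^ x = w := by
          rw [Nat.xor_comm x w, Nat.xor_xor_cancel_right]
        have he2 : ((x ^^^ w) ^^^ x) + x < K * ((x ^^^ w) + 1) := by
          rw [hxw]
          have : K * ((x ^^^ w) + 1) = K * (x ^^^ w) + K := by ring
          omega
        have hle2 : z ^^^ x ≤ x ^^^ w := good_le_exact K hk hgood' he2
        have hle3 : x ^^^ w ≤ y := by rw [← hdveq]; exact hle
        have hcomm : z ^^^ x = x ^^^ z := Nat.xor_comm z x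
        have heq : x ^^^ w = x ^^^ z := by omega
        have := xor_left_cancel heq
        omega
      · have hyeq : y = x ^^^ w := by rw [← min_eq_left hle, hteq]
        have heq : x ^^^ w = x ^^^ z := by rw [← hyeq, hy]
        have := xor_left_cancel heq
        omega
  · rintro ⟨x, y, z⟩ hyle hpA
    simp only [Aset, Set.mem_setOf_eq] at hpA
    have hyle' : y ≤ (x + z) / K := hyle
    have h1 : K * y ≤ x + z := (le_div' hk0).mp hyle'
    have hyne : y ≠ x ^^^ z := by
      intro h
      exact hpA ⟨by rw [h, Nat.xor_xor_cancel_left, Nat.xor_self], hyle'⟩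
    rcases Nat.lt_or_ge y (x ^^^ z) with hlt | hge
    · by_cases hgz : K * y ≤ (y ^^^ z) + z
      · by_cases hgx : K * y ≤ (y ^^^ x) + x
        · rcases xor_disj x y z hlt with h | h
          · have hmin : min (((y ^^^ z) + z) / K) y = y :=
              min_eq_right ((le_div' hk0).mpr hgz)
            refine ⟨(y ^^^ z, y, z), Or.inl ⟨y ^^^ z, h, ?_⟩, ?_, ?_⟩
            · show (y ^^^ z, y, z) = (y ^^^ z, min (((y ^^^ z) + z) / K) y, z)
              rw [hmin]
            · show ((y ^^^ z) ^^^ y) ^^^ z = 0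
              rw [Nat.xor_comm y z, Nat.xor_xor_cancel_right, Nat.xor_self]
            · show y ≤ ((y ^^^ z) + z) / K
              exact (le_div' hk0).mpr hgz
          · have hgx' : K * y ≤ x + (y ^^^ x) := by rw [Nat.add_comm]; exact hgx
            have hmin : min y ((x + (y ^^^ x)) / K) = y :=
              min_eq_left ((le_div' hk0).mpr hgx')
            refine ⟨(x, y, y ^^^ x), Or.inr (Or.inr ⟨y ^^^ x, h, ?_⟩), ?_, ?_⟩
            · show (x, y, y ^^^ x) = (x, min y ((x + (y ^^^ x)) / K), y ^^^ x)
              rw [hmin]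
            · show (x ^^^ y) ^^^ (y ^^^ x) = 0
              rw [Nat.xor_comm y x, Nat.xor_self]
            · show y ≤ (x + (y ^^^ x)) / K
              exact (le_div' hk0).mpr hgx'
        · obtain ⟨t, hty, he1, he2⟩ := exists_exact K hk y x hgx
          have hKy : K * (t + 1) ≤ K * y := Nat.mul_le_mul_left K (by omega)
          have hwz : t ^^^ x < z := by omega
          have hdiv : (x + (t ^^^ x)) / K = t := by
            rw [Nat.add_comm]; exact div_eq_exact he1 he2
          have hmin : min y ((x + (t ^^^ x)) / K) = t := by
            rw [hdiv]; exact min_eq_right (le_of_lt hty)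
          refine ⟨(x, t, t ^^^ x), Or.inr (Or.inr ⟨t ^^^ x, hwz, ?_⟩), ?_, ?_⟩
          · show (x, t, t ^^^ x) = (x, min y ((x + (t ^^^ x)) / K), t ^^^ x)
            rw [hmin]
          · show (x ^^^ t) ^^^ (t ^^^ x) = 0
            rw [Nat.xor_assoc, Nat.xor_xor_cancel_left, Nat.xor_self]
          · show t ≤ (x + (t ^^^ x)) / K
            rw [hdiv]
      · obtain ⟨t, hty, he1, he2⟩ := exists_exact K hk y z hgz
        have hKy : K * (t + 1) ≤ K * y := Nat.mul_le_mul_left K (by omega)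
        have hux : t ^^^ z < x := by omega
        have hdiv : ((t ^^^ z) + z) / K = t := div_eq_exact he1 he2
        have hmin : min (((t ^^^ z) + z) / K) y = t := by
          rw [hdiv]; exact min_eq_left (le_of_lt hty)
        refine ⟨(t ^^^ z, t, z), Or.inl ⟨t ^^^ z, hux, ?_⟩, ?_, ?_⟩
        · show (t ^^^ z, t, z) = (t ^^^ z, min (((t ^^^ z) + z) / K) y, z)
          rw [hmin]
        · show ((t ^^^ z) ^^^ t) ^^^ z = 0
          rw [Nat.xor_comm t z, Nat.xor_xor_cancel_right, Nat.xor_self]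
        · show t ≤ ((t ^^^ z) + z) / K
          rw [hdiv]
    · have hvy : x ^^^ z < y := by omega
      refine ⟨(x, x ^^^ z, z), Or.inr (Or.inl ⟨x ^^^ z, hvy, rfl⟩), ?_, ?_⟩
      · show (x ^^^ (x ^^^ z)) ^^^ z = 0
        rw [Nat.xor_xor_cancel_left, Nat.xor_self]
      · show x ^^^ z ≤ (x + z) / K
        refine (le_div' hk0).mpr ?_
        have : K * (x ^^^ z) ≤ K * y := Nat.mul_le_mul_left K (by omega)
        omega

theorem stmt_14 (m : ℕ) :
    (∀ p ∈ Aset (4 * m + 3), ∀ q ∈ moveF (4 * m + 3) p, q ∉ Aset (4 * m + 3)) ∧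
    (∀ p : ℕ × ℕ × ℕ, p.2.1 ≤ (p.1 + p.2.2) / (4 * m + 3) → p ∉ Aset (4 * m + 3) →
      ∃ q ∈ moveF (4 * m + 3) p, q ∈ Aset (4 * m + 3)) :=
  main_thm (4 * m + 3) (by omega)
end

section
/- Let k = 4m+3 and f(x,z) = floor((x+z)/k). If x ⊕ y ⊕ z = 0 and y ≤ f(x,z), and u < x, v < y satisfy u ⊕ v ⊕ z = 0, then v ≠ f(u,z). -/
lemma aux_xor_parity (p q : ℕ) : (p ^^^ q) % 2 = (p + q) % 2 := by
  simp [Nat.xor_mod_two_eq]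

lemma aux_div_succ (w t : ℕ) : w / 2 ^ t = 2 * (w / 2 ^ (t + 1)) + w / 2 ^ t % 2 := by
  have h := Nat.div_add_mod (w / 2 ^ t) 2
  rw [Nat.div_div_eq_div_mul, ← pow_succ] at h
  omega

lemma aux_decomp_true (w t : ℕ) (h : w.testBit t = true) :
    w = 2 * 2 ^ t * (w / 2 ^ (t + 1)) + 2 ^ t + w % 2 ^ t := by
  have h2 : w / 2 ^ t % 2 = 1 := by
    rw [Nat.testBit_eq_decide_div_mod_eq] at h; simpa using h
  have h3 : w / 2 ^ t = 2 * (w / 2 ^ (t + 1)) + 1 := by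
    have := aux_div_succ w t; omega
  calc w = 2 ^ t * (w / 2 ^ t) + w % 2 ^ t := (Nat.div_add_mod w (2 ^ t)).symm
    _ = 2 ^ t * (2 * (w / 2 ^ (t + 1)) + 1) + w % 2 ^ t := by rw [← h3]
    _ = 2 * 2 ^ t * (w / 2 ^ (t + 1)) + 2 ^ t + w % 2 ^ t := by ring

lemma aux_decomp_false (w t : ℕ) (h : w.testBit t = false) :
    w = 2 * 2 ^ t * (w / 2 ^ (t + 1)) + w % 2 ^ t := by
  have h2 : w / 2 ^ t % 2 = 0 := by
    rw [Nat.testBit_eq_decide_div_mod_eq] at h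
    simp at h
    omega
  have h3 : w / 2 ^ t = 2 * (w / 2 ^ (t + 1)) := by
    have := aux_div_succ w t; omega
  calc w = 2 ^ t * (w / 2 ^ t) + w % 2 ^ t := (Nat.div_add_mod w (2 ^ t)).symm
    _ = 2 ^ t * (2 * (w / 2 ^ (t + 1))) + w % 2 ^ t := by rw [← h3]
    _ = 2 * 2 ^ t * (w / 2 ^ (t + 1)) + w % 2 ^ t := by ring

lemma aux_highdiv (x u t : ℕ) (h : ∀ j, t < j → x.testBit j = u.testBit j) :
    x / 2 ^ (t + 1) = u / 2 ^ (t + 1) := by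
  have h2 : x >>> (t + 1) = u >>> (t + 1) := by
    apply Nat.eq_of_testBit_eq
    intro i
    rw [Nat.testBit_shiftRight, Nat.testBit_shiftRight]
    exact h _ (by omega)
  rwa [Nat.shiftRight_eq_div_pow, Nat.shiftRight_eq_div_pow] at h2

lemma aux_xordiv (x y n : ℕ) : (x ^^^ y) / 2 ^ n = (x / 2 ^ n) ^^^ (y / 2 ^ n) := by
  have h2 : (x ^^^ y) >>> n = (x >>> n) ^^^ (y >>> n) := by
    apply Nat.eq_of_testBit_eq
    intro i
    simp [Nat.testBit_shiftRight, Nat.testBit_xor]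
  rwa [Nat.shiftRight_eq_div_pow, Nat.shiftRight_eq_div_pow,
    Nat.shiftRight_eq_div_pow] at h2


set_option maxHeartbeats 1000000 in
lemma aux_final (m T X Y Z a b c e g : ℕ) (hTpos : 0 < T)
    (ha : a < T) (hc : c < T) (he : e < T) (hg : g < T)
    (hpar : Z % 2 = (X + Y) % 2)
    (hA : (2 * T * Y + T + c) * (4 * m + 3) ≤ 2 * T * X + T + a + (2 * T * Z + g))
    (hC : 2 * T * X + b + (2 * T * Z + g) < (2 * T * Y + e + 1) * (4 * m + 3)) :
    False := by
  have hek : (e + 1) * (4 * m + 3) ≤ T * (4 * m + 3) :=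
    Nat.mul_le_mul_right _ (by omega)
  have step1 : 2 * T * ((4 * m + 3) * Y) + 4 * m * T + 2 ≤ 2 * T * X + 2 * T * Z := by
    nlinarith [hA, ha, hg, Nat.zero_le (c * (4 * m + 3))]
  have step2 : 2 * T * X + 2 * T * Z < 2 * T * ((4 * m + 3) * Y) + (4 * m + 3) * T := by
    nlinarith [hC, hek]
  obtain ⟨W, hW⟩ : ∃ w, w = (4 * m + 3) * Y := ⟨_, rfl⟩
  rw [← hW] at step1 step2
  have hWS : W < X + Z := by
    have h' : 2 * T * W < 2 * T * (X + Z) := by nlinarith [step1]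
    exact Nat.lt_of_mul_lt_mul_left h'
  obtain ⟨D, hD⟩ : ∃ d, X + Z = W + d := ⟨X + Z - W, by omega⟩
  have hbridge : 2 * T * X + 2 * T * Z = 2 * T * W + 2 * T * D := by
    have h' : 2 * T * (X + Z) = 2 * T * (W + D) := by rw [hD]
    linarith [h']
  have hTD1 : 4 * m * T + 2 ≤ 2 * T * D := by linarith
  have hTD2 : 2 * T * D < (4 * m + 3) * T := by linarith
  have hD1 : 4 * m < 2 * D := by
    by_contra h'
    have h'' : 2 * D ≤ 4 * m := by omega
    have h3 := Nat.mul_le_mul_right T h''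
    nlinarith [h3]
  have hD2 : 2 * D < 4 * m + 3 := by
    by_contra h'
    have h'' : 4 * m + 3 ≤ 2 * D := by omega
    have h3 := Nat.mul_le_mul_right T h''
    nlinarith [h3]
  have hDval : D = 2 * m + 1 := by omega
  have hp1 : X + Z + Y = 2 * ((2 * m + 2) * Y + m) + 1 := by
    rw [hD, hW, hDval]; ring
  obtain ⟨r, hr⟩ : ∃ r, X + Z + Y = 2 * r + 1 := ⟨_, hp1⟩
  omega

theorem stmt_16 (m x y z u v : ℕ)
    (h1 : x ^^^ y ^^^ z = 0)
    (h2 : y ≤ (x + z) / (4 * m + 3))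
    (hu : u < x) (hv : v < y)
    (huv : u ^^^ v ^^^ z = 0) :
    v ≠ (u + z) / (4 * m + 3) := by
  intro hveq
  have hk : 0 < 4 * m + 3 := by omega
  have hz1 : x ^^^ y = z := xor_eq_zero_iff.mp h1
  have hz2 : u ^^^ v = z := xor_eq_zero_iff.mp huv
  have hxyuv : x ^^^ y = u ^^^ v := by rw [hz1, hz2]
  have hd : y ^^^ v = x ^^^ u := by
    calc y ^^^ v = (x ^^^ (x ^^^ y)) ^^^ v := by
          rw [← Nat.xor_assoc, Nat.xor_self, Nat.zero_xor]
      _ = (x ^^^ (u ^^^ v)) ^^^ v := by rw [hxyuv]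
      _ = x ^^^ u := by
          rw [Nat.xor_assoc, Nat.xor_assoc, Nat.xor_self, Nat.xor_zero]
  have hdne : x ^^^ u ≠ 0 := fun h0 => absurd (xor_eq_zero_iff.mp h0) (by omega)
  set t := Nat.log2 (x ^^^ u) with htdef
  have hd1 : 2 ^ t ≤ x ^^^ u := Nat.log2_self_le hdne
  have hd2 : x ^^^ u < 2 ^ (t + 1) := Nat.lt_log2_self
  have hTpos : 0 < 2 ^ t := Nat.pow_pos (n := t) (by norm_num)
  have hdt : (x ^^^ u).testBit t = true := by
    rw [Nat.testBit_eq_decide_div_mod_eq]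
    have hdiv : (x ^^^ u) / 2 ^ t = 1 := by
      have h1' : 1 ≤ (x ^^^ u) / 2 ^ t :=
        (Nat.le_div_iff_mul_le hTpos).mpr (by simpa using hd1)
      have h2' : (x ^^^ u) / 2 ^ t < 2 :=
        (Nat.div_lt_iff_lt_mul hTpos).mpr (by rw [pow_succ] at hd2; linarith)
      exact Nat.le_antisymm (Nat.lt_succ_iff.mp h2') h1'
    simp [hdiv]
  have hdj : ∀ j, t < j → (x ^^^ u).testBit j = false := fun j hj =>
    Nat.testBit_lt_two_pow (lt_of_lt_of_le hd2 (Nat.pow_le_pow_right (by norm_num) hj))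
  have hagree_xu : ∀ j, t < j → x.testBit j = u.testBit j := by
    intro j hj
    have h' := hdj j hj
    rw [Nat.testBit_xor] at h'
    cases hx' : x.testBit j <;> cases hu' : u.testBit j <;> simp_all
  have hagree_yv : ∀ j, t < j → y.testBit j = v.testBit j := by
    intro j hj
    have h' : (y ^^^ v).testBit j = false := by rw [hd]; exact hdj j hj
    rw [Nat.testBit_xor] at h'
    cases hy' : y.testBit j <;> cases hv' : v.testBit j <;> simp_all
  have hdtx := hdt
  rw [Nat.testBit_xor] at hdtx
  have hdty : (y.testBit t ^^ v.testBit t) = true := by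
    have h' : (y ^^^ v).testBit t = true := by rw [hd]; exact hdt
    rwa [Nat.testBit_xor] at h'
  have hxt : x.testBit t = true := by
    by_contra hxf
    have hxf' : x.testBit t = false := by simpa using hxf
    have hut : u.testBit t = true := by
      rw [hxf'] at hdtx; simpa using hdtx
    exact absurd (Nat.lt_of_testBit t hxf' hut hagree_xu) (by omega)
  have hut : u.testBit t = false := by
    rw [hxt] at hdtx; simpa using hdtx
  have hyt : y.testBit t = true := by
    by_contra hyf
    have hyf' : y.testBit t = false := by simpa using hyf
    have hvt : v.testBit t = true := by
      rw [hyf'] at hdty; simpa using hdty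
    exact absurd (Nat.lt_of_testBit t hyf' hvt hagree_yv) (by omega)
  have hvt : v.testBit t = false := by
    rw [hyt] at hdty; simpa using hdty
  have hzt : z.testBit t = false := by
    rw [← hz1, Nat.testBit_xor, hxt, hyt]; rfl
  -- decompositions
  have hxu_high : x / 2 ^ (t + 1) = u / 2 ^ (t + 1) := aux_highdiv x u t hagree_xu
  have hyv_high : y / 2 ^ (t + 1) = v / 2 ^ (t + 1) := aux_highdiv y v t hagree_yv
  have hzxy : z / 2 ^ (t + 1) % 2 = (x / 2 ^ (t + 1) + y / 2 ^ (t + 1)) % 2 := by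
    rw [← hz1, aux_xordiv]
    exact aux_xor_parity _ _
  have hxdec : x = 2 * 2 ^ t * (x / 2 ^ (t + 1)) + 2 ^ t + x % 2 ^ t :=
    aux_decomp_true x t hxt
  have hudec : u = 2 * 2 ^ t * (x / 2 ^ (t + 1)) + u % 2 ^ t := by
    have h' := aux_decomp_false u t hut
    rwa [← hxu_high] at h'
  have hydec : y = 2 * 2 ^ t * (y / 2 ^ (t + 1)) + 2 ^ t + y % 2 ^ t :=
    aux_decomp_true y t hyt
  have hvdec : v = 2 * 2 ^ t * (y / 2 ^ (t + 1)) + v % 2 ^ t := by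
    have h' := aux_decomp_false v t hvt
    rwa [← hyv_high] at h'
  have hzdec : z = 2 * 2 ^ t * (z / 2 ^ (t + 1)) + z % 2 ^ t :=
    aux_decomp_false z t hzt
  -- main inequalities
  have hA : y * (4 * m + 3) ≤ x + z := (Nat.le_div_iff_mul_le hk).mp h2
  have hC : u + z < (v + 1) * (4 * m + 3) := by
    have h' : (u + z) / (4 * m + 3) < v + 1 := by omega
    exact (Nat.div_lt_iff_lt_mul hk).mp h'
  rw [hxdec, hydec, hzdec] at hA
  rw [hudec, hvdec, hzdec] at hC
  exact aux_final m (2 ^ t) (x / 2 ^ (t + 1)) (y / 2 ^ (t + 1)) (z / 2 ^ (t + 1))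
    (x % 2 ^ t) (u % 2 ^ t) (y % 2 ^ t) (v % 2 ^ t) (z % 2 ^ t) hTpos
    (Nat.mod_lt _ hTpos) (Nat.mod_lt _ hTpos) (Nat.mod_lt _ hTpos) (Nat.mod_lt _ hTpos)
    hzxy hA hC
end
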